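/- Approximation of the Dirac delta derivative lower bound: for integers p ≥ m ≥ 1 and T > 0, there exists a constant c > 0 such that for all sufficiently small η > 0, every u ∈ L²[0,T] with ‖φᵖu − t^{p−m}/(p−m)!‖_{L²[0,T]} < η satisfies ‖u‖_{L²[0,T]} ≥ c·η^{−(2m−1)/(2(p−m)+1)}. -/

import Mathlib

noncomputable def primitive (u : ℝ → ℝ) : ℝ → ℝ := fun t => ∫ τ in (0:ℝ)..t, u τ

open MeasureTheory intervalIntegral

open Polynomial Finset in
lemma lagrange_sum_eq_one {k : ℕ} (t : Fin (k+1) → ℝ) (ht : Function.Injective t) :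
    ∑ i, (t i)^k * (∏ j ∈ Finset.univ.erase i, (t i - t j))⁻¹ = 1 := by
  classical
  have hvs : Set.InjOn t (Finset.univ : Finset (Fin (k+1))) := ht.injOn
  have hcard : ((Finset.univ : Finset (Fin (k+1))).card) = k+1 := by simp
  have hdeg : (X^k : ℝ[X]).degree < ((Finset.univ : Finset (Fin (k+1))).card : ℕ) := by
    rw [degree_X_pow, hcard]
    exact_mod_cast Nat.lt_succ_self k
  have h := Lagrange.eq_interpolate hvs hdeg
  have h2 := congrArg (fun q : ℝ[X] => q.coeff k) h
  simp only [Lagrange.interpolate_apply, eval_pow, eval_X, finset_sum_coeff, coeff_C_mul,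
    coeff_X_pow, if_pos rfl] at h2
  have hb : ∀ i : Fin (k+1), (Lagrange.basis Finset.univ t i).coeff k
      = (∏ j ∈ Finset.univ.erase i, (t i - t j))⁻¹ := by
    intro i
    have hnd : (Lagrange.basis Finset.univ t i).natDegree = k := by
      rw [Lagrange.natDegree_basis hvs (Finset.mem_univ i), hcard]
      omega
    rw [show (Lagrange.basis Finset.univ t i).coeff k
        = (Lagrange.basis Finset.univ t i).leadingCoeff by
      rw [Polynomial.leadingCoeff, hnd]]
    rw [Lagrange.basis,
      Polynomial.leadingCoeff_prod, ← Finset.prod_inv_distrib]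
    refine Finset.prod_congr rfl fun j hj => ?_
    rw [Lagrange.basisDivisor, Polynomial.leadingCoeff_mul, Polynomial.leadingCoeff_C,
      (Polynomial.monic_X_sub_C (t j)).leadingCoeff, mul_one]
  simp only [if_pos trivial] at h2
  rw [show (1:ℝ) = ∑ x : Fin (k+1), t x ^ k * (Lagrange.basis Finset.univ t x).coeff k from h2]
  exact Finset.sum_congr rfl fun i _ => by rw [hb i]

lemma cs_lemma {u : ℝ → ℝ} {t : ℝ} (ht : 0 ≤ t)
    (hu : IntervalIntegrable u volume 0 t)
    (hu2 : IntervalIntegrable (fun s => u s ^ 2) volume 0 t) :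
    ∫ s in (0:ℝ)..t, |u s| ≤ Real.sqrt t * Real.sqrt (∫ s in (0:ℝ)..t, u s ^ 2) := by
  set E := ∫ s in (0:ℝ)..t, u s ^ 2 with hE
  have hE0 : 0 ≤ E := intervalIntegral.integral_nonneg ht (fun s _ => sq_nonneg _)
  have key : ∀ lam : ℝ, 0 < lam →
      ∫ s in (0:ℝ)..t, |u s| ≤ lam * t / 2 + E / (2 * lam) := by
    intro lam hlam
    have h1 : ∫ s in (0:ℝ)..t, |u s| ≤ ∫ s in (0:ℝ)..t, (lam / 2 + u s ^ 2 / (2 * lam)) := by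
      apply intervalIntegral.integral_mono_on ht hu.abs
      · exact (_root_.intervalIntegrable_const).add (hu2.div_const _)
      · intro s _
        have h2 : u s ^ 2 = |u s| ^ 2 := (sq_abs _).symm
        have hl2 : (0:ℝ) < 2 * lam := by linarith
        rw [h2, show lam / 2 + |u s| ^ 2 / (2 * lam) = (lam * lam + |u s| ^ 2) / (2 * lam) by
          field_simp, le_div_iff₀ hl2]
        nlinarith [sq_nonneg (|u s| - lam)]
    calc ∫ s in (0:ℝ)..t, |u s| ≤ ∫ s in (0:ℝ)..t, (lam / 2 + u s ^ 2 / (2 * lam)) := h1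
      _ = lam * t / 2 + E / (2 * lam) := by
          rw [intervalIntegral.integral_add _root_.intervalIntegrable_const (hu2.div_const _),
            intervalIntegral.integral_const, intervalIntegral.integral_div]
          simp [hE]
          ring
  rcases eq_or_lt_of_le ht with h | h
  · simp [← h]
  rcases eq_or_lt_of_le hE0 with hE' | hE'
  · -- E = 0
    have : ∀ lam : ℝ, 0 < lam → ∫ s in (0:ℝ)..t, |u s| ≤ lam * t / 2 := by
      intro lam hlam
      have := key lam hlam
      rw [← hE'] at this
      simpa using this
    have h0 : ∫ s in (0:ℝ)..t, |u s| ≤ 0 := by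
      by_contra hc
      push_neg at hc
      set a := ∫ s in (0:ℝ)..t, |u s|
      have := this (a / t) (div_pos hc h)
      rw [div_mul_cancel₀ _ (ne_of_gt h)] at this
      linarith
    have h1 : 0 ≤ Real.sqrt t * Real.sqrt E := by positivity
    linarith
  · -- E > 0
    have hst : 0 < Real.sqrt t := Real.sqrt_pos.mpr h
    have hsE : 0 < Real.sqrt E := Real.sqrt_pos.mpr hE'
    have := key (Real.sqrt E / Real.sqrt t) (div_pos hsE hst)
    have ht2 : Real.sqrt t ^ 2 = t := Real.sq_sqrt ht
    have hE2 : Real.sqrt E ^ 2 = E := Real.sq_sqrt hE0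
    have heq : Real.sqrt E / Real.sqrt t * t / 2 + E / (2 * (Real.sqrt E / Real.sqrt t))
        = Real.sqrt t * Real.sqrt E := by
      field_simp
      nlinarith
    linarith [this, heq ▸ this]

lemma integral_sq_mono {f : ℝ → ℝ} {a b T : ℝ} (h0 : 0 ≤ a) (hab : a ≤ b) (hbT : b ≤ T)
    (hf : IntervalIntegrable (fun s => f s ^ 2) volume 0 T) :
    ∫ s in a..b, f s ^ 2 ≤ ∫ s in (0:ℝ)..T, f s ^ 2 := by
  have h0T : (0:ℝ) ≤ T := (h0.trans hab).trans hbT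
  have hsub : ∀ c d : ℝ, 0 ≤ c → c ≤ d → d ≤ T → Set.uIcc c d ⊆ Set.uIcc 0 T := by
    intro c d hc hcd hdT
    rw [Set.uIcc_of_le hcd, Set.uIcc_of_le h0T]
    exact Set.Icc_subset_Icc hc hdT
  have i1 := hf.mono_set (hsub 0 a le_rfl h0 (hab.trans hbT))
  have i2 := hf.mono_set (hsub a b h0 hab hbT)
  have i3 := hf.mono_set (hsub b T (h0.trans hab) hbT le_rfl)
  have e1 := intervalIntegral.integral_add_adjacent_intervals i1 i2
  have e2 := intervalIntegral.integral_add_adjacent_intervals (i1.trans i2) i3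
  have n1 : 0 ≤ ∫ s in (0:ℝ)..a, f s ^ 2 :=
    intervalIntegral.integral_nonneg h0 (fun s _ => sq_nonneg _)
  have n3 : 0 ≤ ∫ s in b..T, f s ^ 2 :=
    intervalIntegral.integral_nonneg hbT (fun s _ => sq_nonneg _)
  linarith

lemma exists_small {w : ℝ → ℝ} {a b E : ℝ} (hab : a < b)
    (hw : ContinuousOn w (Set.Icc a b))
    (hE : ∫ s in a..b, w s ^ 2 ≤ E) :
    ∃ t ∈ Set.Icc a b, w t ^ 2 ≤ E / (b - a) := by
  have hco : ContinuousOn (fun s => w s ^ 2) (Set.Icc a b) := hw.pow 2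
  obtain ⟨t₀, ht₀, hmin⟩ := isCompact_Icc.exists_isMinOn (Set.nonempty_Icc.mpr hab.le) hco
  refine ⟨t₀, ht₀, ?_⟩
  have h1 : ∫ s in a..b, w t₀ ^ 2 ≤ ∫ s in a..b, w s ^ 2 := by
    apply intervalIntegral.integral_mono_on hab.le _root_.intervalIntegrable_const
    · apply ContinuousOn.intervalIntegrable; rwa [Set.uIcc_of_le hab.le]
    · intro s hs; exact hmin hs
  rw [intervalIntegral.integral_const, smul_eq_mul] at h1
  have hba : 0 < b - a := by linarith
  rw [le_div_iff₀ hba]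
  nlinarith

lemma primitive_continuousOn {u : ℝ → ℝ} {T : ℝ} (hT : 0 ≤ T)
    (hu : IntervalIntegrable u volume 0 T) :
    ∀ j : ℕ, ContinuousOn (primitive^[j+1] u) (Set.Icc 0 T) := by
  intro j
  induction j with
  | zero =>
    have := intervalIntegral.continuousOn_primitive_interval' hu
      (Set.left_mem_uIcc (a := (0:ℝ)) (b := T))
    rw [Set.uIcc_of_le hT] at this; exact this
  | succ j ih =>
    rw [Function.iterate_succ_apply']
    have hint : IntegrableOn (primitive^[j+1] u) (Set.uIcc 0 T) volume := by
      rw [Set.uIcc_of_le hT]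
      exact ih.integrableOn_compact isCompact_Icc
    have := intervalIntegral.continuousOn_primitive_interval (a := (0:ℝ)) (b := T) hint
    rw [Set.uIcc_of_le hT] at this; exact this

lemma primitive_bound {u : ℝ → ℝ} {T : ℝ} (hT : 0 ≤ T)
    (hu : IntervalIntegrable u volume 0 T)
    (hu2 : IntervalIntegrable (fun s => u s ^ 2) volume 0 T) :
    ∀ j : ℕ, ∀ t ∈ Set.Icc (0:ℝ) T,
      |primitive^[j+1] u t| ≤ Real.sqrt t * t ^ j * Real.sqrt (∫ s in (0:ℝ)..T, u s ^ 2) := by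
  have N0 : 0 ≤ Real.sqrt (∫ s in (0:ℝ)..T, u s ^ 2) := Real.sqrt_nonneg _
  set N := Real.sqrt (∫ s in (0:ℝ)..T, u s ^ 2) with hN
  intro j
  induction j with
  | zero =>
    rintro t ⟨ht0, htT⟩
    have hsub : Set.uIcc 0 t ⊆ Set.uIcc 0 T := by
      rw [Set.uIcc_of_le ht0, Set.uIcc_of_le hT]
      exact Set.Icc_subset_Icc le_rfl htT
    have h1 : |primitive u t| ≤ ∫ s in (0:ℝ)..t, |u s| := by
      simpa [primitive] using intervalIntegral.abs_integral_le_integral_abs ht0 (f := u)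
    have h2 := cs_lemma ht0 (hu.mono_set hsub) (hu2.mono_set hsub)
    have h3 : ∫ s in (0:ℝ)..t, u s ^ 2 ≤ ∫ s in (0:ℝ)..T, u s ^ 2 :=
      integral_sq_mono le_rfl ht0 htT hu2
    have h4 : Real.sqrt (∫ s in (0:ℝ)..t, u s ^ 2) ≤ N := Real.sqrt_le_sqrt h3
    have h5 : Real.sqrt t * Real.sqrt (∫ s in (0:ℝ)..t, u s ^ 2) ≤ Real.sqrt t * N :=
      mul_le_mul_of_nonneg_left h4 (Real.sqrt_nonneg t)
    show |primitive u t| ≤ Real.sqrt t * t ^ 0 * N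
    calc |primitive u t| ≤ _ := h1
      _ ≤ _ := h2
      _ ≤ Real.sqrt t * N := h5
      _ = Real.sqrt t * t ^ 0 * N := by ring
  | succ j ih =>
    rintro t ⟨ht0, htT⟩
    have hF := primitive_continuousOn hT hu j
    have hint : IntervalIntegrable (primitive^[j+1] u) volume 0 t := by
      apply ContinuousOn.intervalIntegrable
      rw [Set.uIcc_of_le ht0]
      exact hF.mono (Set.Icc_subset_Icc le_rfl htT)
    have h1 : |primitive^[j+1+1] u t| ≤ ∫ s in (0:ℝ)..t, |primitive^[j+1] u s| := by
      rw [Function.iterate_succ_apply']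
      simpa [primitive] using
        intervalIntegral.abs_integral_le_integral_abs ht0 (f := primitive^[j+1] u)
    have h2 : ∫ s in (0:ℝ)..t, |primitive^[j+1] u s|
        ≤ ∫ s in (0:ℝ)..t, Real.sqrt t * s ^ j * N := by
      apply intervalIntegral.integral_mono_on ht0 hint.abs
      · apply Continuous.intervalIntegrable
        continuity
      · intro s hs
        calc |primitive^[j+1] u s| ≤ Real.sqrt s * s ^ j * N :=
              ih s ⟨hs.1, le_trans hs.2 htT⟩
          _ ≤ Real.sqrt t * s ^ j * N := by
              apply mul_le_mul_of_nonneg_right _ N0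
              exact mul_le_mul_of_nonneg_right (Real.sqrt_le_sqrt hs.2) (pow_nonneg hs.1 j)
    have h3 : ∫ s in (0:ℝ)..t, Real.sqrt t * s ^ j * N
        = Real.sqrt t * N * (t ^ (j+1) / (j+1)) := by
      have e : ∀ s : ℝ, Real.sqrt t * s ^ j * N = (Real.sqrt t * N) * s ^ j := fun s => by ring
      simp_rw [e]
      rw [intervalIntegral.integral_const_mul, integral_pow]
      push_cast
      ring
    have h4 : Real.sqrt t * N * (t ^ (j+1) / (j+1)) ≤ Real.sqrt t * t ^ (j+1) * N := by
      have hle : t ^ (j+1) / ((j:ℝ)+1) ≤ t ^ (j+1) := by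
        apply div_le_self (pow_nonneg ht0 _)
        have : (1:ℝ) ≤ (j:ℝ) + 1 := by linarith [Nat.cast_nonneg (α := ℝ) j]
        linarith
      calc Real.sqrt t * N * (t ^ (j+1) / ((j:ℝ)+1)) ≤ Real.sqrt t * N * t ^ (j+1) :=
            mul_le_mul_of_nonneg_left hle (by positivity)
        _ = Real.sqrt t * t ^ (j+1) * N := by ring
    calc |primitive^[j+1+1] u t| ≤ _ := h1
      _ ≤ _ := h2
      _ = _ := h3
      _ ≤ _ := h4

set_option maxHeartbeats 1000000 in
theorem stmt_14 (p m : ℕ) (hm : 1 ≤ m) (hpm : m ≤ p) (T : ℝ) (hT : 0 < T) :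
    ∃ c > (0:ℝ), ∃ η₀ > (0:ℝ), ∀ η : ℝ, 0 < η → η < η₀ →
      ∀ u : ℝ → ℝ, IntervalIntegrable u MeasureTheory.volume 0 T →
        IntervalIntegrable (fun t => (u t) ^ 2) MeasureTheory.volume 0 T →
        Real.sqrt (∫ t in (0:ℝ)..T,
            ((primitive^[p] u) t - t ^ (p - m) / (Nat.factorial (p - m))) ^ 2) < η →
        c * η ^ (-((2 * (m : ℝ) - 1) / (2 * ((p : ℝ) - m) + 1))) ≤
          Real.sqrt (∫ t in (0:ℝ)..T, (u t) ^ 2) := by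
  obtain ⟨m', rfl⟩ : ∃ m', m = m' + 1 := ⟨m - 1, by omega⟩
  obtain ⟨k, rfl⟩ : ∃ k, p = k + (m' + 1) := ⟨p - (m' + 1), by omega⟩
  clear hm hpm
  set K : ℝ := (Nat.factorial k : ℝ) with hK
  have hKpos : 0 < K := by positivity
  set ck : ℝ := 2 * (k : ℝ) + 2 with hck
  have hckpos : (0:ℝ) < ck := by positivity
  have hck1 : (1:ℝ) ≤ ck := by
    have := Nat.cast_nonneg (α := ℝ) k
    rw [hck]; linarith
  set C₂ : ℝ := ((k : ℝ) + 1) * ck ^ k with hC₂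
  have hC₂pos : 0 < C₂ := by positivity
  set B : ℝ := 2 * K * ((k : ℝ) + 1) * ck ^ (k + 1) with hB
  have hBpos : 0 < B := by positivity
  set α : ℝ := (2 * (m' : ℝ) + 1) / (2 * (k : ℝ) + 1) with hα
  have h2k1 : (0:ℝ) < 2 * (k : ℝ) + 1 := by positivity
  have hαpos : 0 < α := by positivity
  refine ⟨B ^ (-α) / (2 * K * C₂), by positivity, T ^ k * Real.sqrt T / B, by positivity,
    ?_⟩
  intro η hη hηsmall u hu hu2 hclose
  set N : ℝ := Real.sqrt (∫ t in (0:ℝ)..T, (u t) ^ 2) with hN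
  have hN0 : 0 ≤ N := Real.sqrt_nonneg _
  -- rewrite the exponent
  have hexp : -((2 * ((m' + 1 : ℕ) : ℝ) - 1) / (2 * (((k + (m' + 1) : ℕ) : ℝ) - ((m' + 1 : ℕ) : ℝ)) + 1)) = -α := by
    rw [hα]; push_cast; ring_nf
  rw [hexp]
  -- set up x and h
  set x : ℝ := B * η with hx
  have hxpos : 0 < x := by positivity
  set e : ℝ := 2 / (2 * (k : ℝ) + 1) with he
  set h : ℝ := x ^ e with hh
  have hhpos : 0 < h := Real.rpow_pos_of_pos hxpos e
  have hpow : ∀ j : ℕ, h ^ j * Real.sqrt h = x ^ (e * (2 * (j : ℝ) + 1) / 2) := by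
    intro j
    rw [hh, Real.sqrt_eq_rpow, ← Real.rpow_natCast (x ^ e) j, ← Real.rpow_mul hxpos.le,
      ← Real.rpow_mul hxpos.le, ← Real.rpow_add hxpos]
    congr 1
    ring
  have hkx : h ^ k * Real.sqrt h = x := by
    rw [hpow k, show e * (2 * (k : ℝ) + 1) / 2 = 1 by rw [he]; field_simp, Real.rpow_one]
  have hmx : h ^ m' * Real.sqrt h = x ^ α := by
    rw [hpow m']
    congr 1
    rw [he, hα]
    field_simp
  -- h ≤ T
  have hxT : x < T ^ k * Real.sqrt T := by
    have : B * η < B * (T ^ k * Real.sqrt T / B) := by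
      apply mul_lt_mul_of_pos_left hηsmall hBpos
    rwa [mul_div_cancel₀ _ (ne_of_gt hBpos)] at this
  have hhT : h ≤ T := by
    by_contra hcon
    push_neg at hcon
    have h1 : T ^ k ≤ h ^ k := pow_le_pow_left₀ hT.le hcon.le k
    have h2 : Real.sqrt T < Real.sqrt h := Real.sqrt_lt_sqrt hT.le hcon
    have : T ^ k * Real.sqrt T < h ^ k * Real.sqrt h :=
      mul_lt_mul' h1 h2 (Real.sqrt_nonneg T) (pow_pos hhpos k)
    rw [hkx] at this
    linarith
  -- delta
  set δ : ℝ := h / ck with hδ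
  have hδpos : 0 < δ := by positivity
  have hδck : ck * δ = h := by rw [hδ]; field_simp
  -- the function w and its properties
  set v : ℝ → ℝ := primitive^[k + (m' + 1)] u with hv
  set w : ℝ → ℝ := fun t => v t - t ^ k / K with hw
  have hvcont : ContinuousOn v (Set.Icc 0 T) := primitive_continuousOn hT.le hu (k + m')
  have hwcont : ContinuousOn w (Set.Icc 0 T) := by
    apply hvcont.sub
    exact (Continuous.continuousOn (by continuity))
  set E : ℝ := ∫ t in (0:ℝ)..T, (w t) ^ 2 with hE
  have hE0 : 0 ≤ E := intervalIntegral.integral_nonneg hT.le (fun s _ => sq_nonneg _)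
  have hEη : E ≤ η ^ 2 := by
    have hs : Real.sqrt E < η := by
      have : k + (m' + 1) - (m' + 1) = k := by omega
      rw [this] at hclose
      exact hclose
    calc E = Real.sqrt E ^ 2 := (Real.sq_sqrt hE0).symm
      _ ≤ η ^ 2 := pow_le_pow_left₀ (Real.sqrt_nonneg E) hs.le 2
  -- choose points
  have hpoints : ∀ i : Fin (k + 1), ∃ t ∈ Set.Icc (2 * (i : ℝ) * δ) (2 * (i : ℝ) * δ + δ),
      w t ^ 2 ≤ E / δ := by
    intro i
    have hik : (i : ℝ) ≤ (k : ℝ) := by exact_mod_cast Nat.lt_succ_iff.mp i.isLt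
    have ha0 : 0 ≤ 2 * (i : ℝ) * δ := by positivity
    have hbT : 2 * (i : ℝ) * δ + δ ≤ T := by
      have : 2 * (i : ℝ) * δ + δ ≤ ck * δ := by rw [hck]; nlinarith
      rw [hδck] at this
      linarith
    have hab : 2 * (i : ℝ) * δ < 2 * (i : ℝ) * δ + δ := by linarith
    have hwc : ContinuousOn w (Set.Icc (2 * (i : ℝ) * δ) (2 * (i : ℝ) * δ + δ)) :=
      hwcont.mono (Set.Icc_subset_Icc ha0 hbT)
    have hIE : ∫ s in (2 * (i : ℝ) * δ)..(2 * (i : ℝ) * δ + δ), w s ^ 2 ≤ E := by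
      apply integral_sq_mono ha0 hab.le hbT
      apply ContinuousOn.intervalIntegrable
      rw [Set.uIcc_of_le hT.le]
      exact hwcont.pow 2
    obtain ⟨t, htmem, htsq⟩ := exists_small hab hwc hIE
    exact ⟨t, htmem, by simpa using htsq⟩
  choose tt htt hwt using hpoints
  have htt0 : ∀ i, 0 ≤ tt i := fun i => le_trans (by positivity) (htt i).1
  have htth : ∀ i, tt i ≤ h := by
    intro i
    have hik : (i : ℝ) ≤ (k : ℝ) := by exact_mod_cast Nat.lt_succ_iff.mp i.isLt
    have : 2 * (i : ℝ) * δ + δ ≤ ck * δ := by rw [hck]; nlinarith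
    rw [hδck] at this
    exact le_trans (htt i).2 this
  have httT : ∀ i, tt i ≤ T := fun i => le_trans (htth i) hhT
  have hsep : ∀ i j : Fin (k + 1), (j : ℕ) < (i : ℕ) → δ ≤ tt i - tt j := by
    intro i j hij
    have hi := (htt i).1
    have hj := (htt j).2
    have hcast : (j : ℝ) + 1 ≤ (i : ℝ) := by exact_mod_cast hij
    nlinarith
  have hsep' : ∀ i j : Fin (k + 1), i ≠ j → δ ≤ |tt i - tt j| := by
    intro i j hij
    rcases Nat.lt_or_ge (j : ℕ) (i : ℕ) with hlt | hge
    · exact le_trans (hsep i j hlt) (le_abs_self _)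
    · have : (i : ℕ) < (j : ℕ) := by
        rcases Nat.lt_or_ge (i : ℕ) (j : ℕ) with h' | h'
        · exact h'
        · exact absurd (Fin.ext (Nat.le_antisymm hge h')) hij
      calc δ ≤ tt j - tt i := hsep j i this
        _ ≤ |tt i - tt j| := by rw [abs_sub_comm]; exact le_abs_self _
  have hinj : Function.Injective tt := by
    intro i j hij
    by_contra hne
    have := hsep' i j hne
    rw [hij, sub_self, abs_zero] at this
    linarith
  -- the products
  set A : Fin (k + 1) → ℝ := fun i => ∏ j ∈ Finset.univ.erase i, (tt i - tt j) with hA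
  have hAbound : ∀ i, δ ^ k ≤ |A i| := by
    intro i
    rw [hA]
    rw [Finset.abs_prod]
    have hcard : (Finset.univ.erase i).card = k := by
      rw [Finset.card_erase_of_mem (Finset.mem_univ i)]
      simp
    calc δ ^ k = ∏ _j ∈ Finset.univ.erase i, δ := by rw [Finset.prod_const, hcard]
      _ ≤ ∏ j ∈ Finset.univ.erase i, |tt i - tt j| := by
          apply Finset.prod_le_prod (fun _ _ => hδpos.le)
          intro j hj
          exact hsep' i j (Finset.mem_erase.mp hj).1.symm
  have hApos : ∀ i, 0 < |A i| := fun i => lt_of_lt_of_le (pow_pos hδpos k) (hAbound i)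
  have hAinv : ∀ i, |A i|⁻¹ ≤ (δ ^ k)⁻¹ := by
    intro i
    exact inv_anti₀ (pow_pos hδpos k) (hAbound i)
  -- sum bound helper
  have sumbound : ∀ (f : Fin (k + 1) → ℝ) (M : ℝ), 0 ≤ M → (∀ i, |f i| ≤ M) →
      |∑ i, f i * (A i)⁻¹| ≤ ((k : ℝ) + 1) * M * (δ ^ k)⁻¹ := by
    intro f M hM hfM
    calc |∑ i, f i * (A i)⁻¹| ≤ ∑ i, |f i * (A i)⁻¹| := Finset.abs_sum_le_sum_abs _ _
      _ ≤ ∑ _i : Fin (k + 1), M * (δ ^ k)⁻¹ := by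
          apply Finset.sum_le_sum
          intro i _
          rw [abs_mul, abs_inv]
          exact mul_le_mul (hfM i) (hAinv i) (by positivity) hM
      _ = ((k : ℝ) + 1) * M * (δ ^ k)⁻¹ := by
          rw [Finset.sum_const, Finset.card_univ]
          simp [Fintype.card_fin]
          ring
  -- the key identity
  have hvw : ∀ i, v (tt i) = w (tt i) + (tt i) ^ k / K := fun i => by rw [hw]; ring
  have hiden : (1 : ℝ) / K = ∑ i, (v (tt i)) * (A i)⁻¹ - ∑ i, (w (tt i)) * (A i)⁻¹ := by
    rw [← Finset.sum_sub_distrib]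
    have : ∀ i ∈ Finset.univ, v (tt i) * (A i)⁻¹ - w (tt i) * (A i)⁻¹
        = ((tt i) ^ k * (A i)⁻¹) * (1 / K) := by
      intro i _
      rw [hvw i]
      ring
    rw [Finset.sum_congr rfl this, ← Finset.sum_mul, lagrange_sum_eq_one tt hinj, one_mul]
  -- bounds on the two sums
  have hvbound : ∀ i, |v (tt i)| ≤ Real.sqrt h * h ^ (k + m') * N := by
    intro i
    have h1 : |v (tt i)| ≤ Real.sqrt (tt i) * (tt i) ^ (k + m') * N :=
      primitive_bound hT.le hu hu2 (k + m') (tt i) ⟨htt0 i, httT i⟩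
    calc |v (tt i)| ≤ Real.sqrt (tt i) * (tt i) ^ (k + m') * N := h1
      _ ≤ Real.sqrt h * h ^ (k + m') * N := by
          apply mul_le_mul_of_nonneg_right _ hN0
          exact mul_le_mul (Real.sqrt_le_sqrt (htth i))
            (pow_le_pow_left₀ (htt0 i) (htth i) _) (pow_nonneg (htt0 i) _) (Real.sqrt_nonneg h)
  have hwbound : ∀ i, |w (tt i)| ≤ η / Real.sqrt δ := by
    intro i
    have h1 : w (tt i) ^ 2 ≤ η ^ 2 / δ := by
      calc w (tt i) ^ 2 ≤ E / δ := hwt i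
        _ ≤ η ^ 2 / δ := (div_le_div_iff_of_pos_right hδpos).mpr hEη
    have h2 : |w (tt i)| ≤ Real.sqrt (η ^ 2 / δ) := Real.abs_le_sqrt h1
    rwa [Real.sqrt_div (sq_nonneg η), Real.sqrt_sq hη.le] at h2
  -- assemble
  have key : 1 / K ≤ ((k : ℝ) + 1) * (Real.sqrt h * h ^ (k + m') * N) * (δ ^ k)⁻¹
      + ((k : ℝ) + 1) * (η / Real.sqrt δ) * (δ ^ k)⁻¹ := by
    have h1 : (1 : ℝ) / K ≤ |∑ i, (v (tt i)) * (A i)⁻¹| + |∑ i, (w (tt i)) * (A i)⁻¹| := by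
      rw [show (1:ℝ)/K = |(1:ℝ)/K| from (abs_of_pos (by positivity)).symm, hiden]
      exact abs_sub _ _
    have h2 := sumbound (fun i => v (tt i)) _ (mul_nonneg (by positivity) hN0) hvbound
    have h3 := sumbound (fun i => w (tt i)) _ (div_nonneg hη.le (Real.sqrt_nonneg δ)) hwbound
    linarith
  -- simplify the two terms
  have hsqrtδ : Real.sqrt δ = Real.sqrt h / Real.sqrt ck := by
    rw [hδ, Real.sqrt_div hhpos.le]
  have hδk : δ ^ k = h ^ k / ck ^ k := by rw [hδ, div_pow]
  have hsh : 0 < Real.sqrt h := Real.sqrt_pos.mpr hhpos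
  have hsck : 0 < Real.sqrt ck := Real.sqrt_pos.mpr hckpos
  have hsδpos : 0 < Real.sqrt δ := Real.sqrt_pos.mpr hδpos
  have hδδ : Real.sqrt δ * δ ^ k = x / (ck ^ k * Real.sqrt ck) := by
    rw [hsqrtδ, hδk, ← hkx]
    field_simp
  have hv2 : (η / Real.sqrt δ) * (δ ^ k)⁻¹ = ck ^ k * Real.sqrt ck / B := by
    rw [← div_eq_mul_inv, div_div, hδδ, hx]
    field_simp
  have hsle : Real.sqrt ck ≤ ck := by
    calc Real.sqrt ck ≤ Real.sqrt (ck ^ 2) := Real.sqrt_le_sqrt (by nlinarith)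
      _ = ck := Real.sqrt_sq hckpos.le
  have h3 : ((k : ℝ) + 1) * (ck ^ k * Real.sqrt ck / B) = Real.sqrt ck / (2 * K * ck) := by
    rw [hB]
    field_simp
    ring
  have h4 : Real.sqrt ck / (2 * K * ck) ≤ 1 / (2 * K) := by
    rw [div_le_div_iff₀ (by positivity) (by positivity)]
    calc Real.sqrt ck * (2 * K) ≤ ck * (2 * K) :=
          mul_le_mul_of_nonneg_right hsle (by positivity)
      _ = 1 * (2 * K * ck) := by ring
  have h5 : Real.sqrt h * h ^ (k + m') * (δ ^ k)⁻¹ = ck ^ k * x ^ α := by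
    rw [hδk, pow_add, ← hmx]
    field_simp
  have e1 : ((k : ℝ) + 1) * (Real.sqrt h * h ^ (k + m') * N) * (δ ^ k)⁻¹ = C₂ * x ^ α * N := by
    calc ((k : ℝ) + 1) * (Real.sqrt h * h ^ (k + m') * N) * (δ ^ k)⁻¹
        = ((k : ℝ) + 1) * ((Real.sqrt h * h ^ (k + m') * (δ ^ k)⁻¹) * N) := by ring
      _ = ((k : ℝ) + 1) * ((ck ^ k * x ^ α) * N) := by rw [h5]
      _ = C₂ * x ^ α * N := by rw [hC₂]; ring
  have e2 : ((k : ℝ) + 1) * (η / Real.sqrt δ) * (δ ^ k)⁻¹ = ((k : ℝ) + 1) * (ck ^ k * Real.sqrt ck / B) := by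
    calc ((k : ℝ) + 1) * (η / Real.sqrt δ) * (δ ^ k)⁻¹
        = ((k : ℝ) + 1) * ((η / Real.sqrt δ) * (δ ^ k)⁻¹) := by ring
      _ = ((k : ℝ) + 1) * (ck ^ k * Real.sqrt ck / B) := by rw [hv2]
  have key2 : 1 / (2 * K) ≤ C₂ * x ^ α * N := by
    have hKK : 1 / K - 1 / (2 * K) = 1 / (2 * K) := by field_simp; ring
    rw [e1, e2, h3] at key
    linarith
  have hxα : 0 < x ^ α := Real.rpow_pos_of_pos hxpos α
  have h6 : 1 ≤ C₂ * x ^ α * N * (2 * K) := by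
    rw [div_le_iff₀ (by positivity)] at key2
    linarith
  have hmul : (B : ℝ) ^ (-α) * η ^ (-α) = (x ^ α)⁻¹ := by
    rw [← Real.mul_rpow hBpos.le hη.le, ← hx, Real.rpow_neg hxpos.le]
  calc B ^ (-α) / (2 * K * C₂) * η ^ (-α) = (B ^ (-α) * η ^ (-α)) / (2 * K * C₂) := by ring
    _ = (x ^ α)⁻¹ / (2 * K * C₂) := by rw [hmul]
    _ ≤ N := by
        rw [div_le_iff₀ (by positivity), inv_eq_one_div, div_le_iff₀ hxα]
        have : N * (2 * K * C₂) * x ^ α = C₂ * x ^ α * N * (2 * K) := by ring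
        rw [this]
        exact h6
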